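/- For all natural numbers n ≥ 1 and m ≥ 3, the radius of the sunlet graph with degree n satisfies rad(S_m^n) = ⌊m/2⌋ + n. -/

import Mathlib

open SimpleGraph Finset

/-- The sunlet graph with degree `n` on the cycle `C_m`, `S_m^n`: a path on `n`
new vertices (a branch) is attached to each vertex of the cycle `C_m`.
The vertex `(i, 0)` is the `i`-th base vertex (on the cycle) and, for
`1 ≤ j ≤ n`, the vertex `(i, j)` is the `j`-th pendant vertex of the branch
attached at `(i, 0)`. -/
def sunletDeg (m n : ℕ) : SimpleGraph (Fin m × Fin (n + 1)) :=
  SimpleGraph.fromRel (fun a b =>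
    (a.2 = 0 ∧ b.2 = 0 ∧ (SimpleGraph.cycleGraph m).Adj a.1 b.1) ∨
    (a.1 = b.1 ∧ (a.2 : ℕ) + 1 = (b.2 : ℕ)))

/-- The eccentricity of a vertex: the maximum distance from `v` to any vertex. -/
noncomputable def eccentricity {V : Type*} [Fintype V] (G : SimpleGraph V) (v : V) : ℕ :=
  Finset.univ.sup fun u => G.dist u v

/-- The radius of a graph: the minimum eccentricity over all vertices. -/
noncomputable def graphRadius (V : Type*) [Fintype V] (G : SimpleGraph V) : ℕ :=
  sInf {e : ℕ | ∃ v : V, eccentricity G v = e}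

/- ## Auxiliary lemmas -/

/-- A 1-Lipschitz function decreases by at most the walk length. -/
lemma sunlet_lip_walk {V : Type*} {G : SimpleGraph V} (f : V → ℕ)
    (hf : ∀ a b, G.Adj a b → f a ≤ f b + 1) :
    ∀ {u v : V} (w : G.Walk u v), f u ≤ w.length + f v := by
  intro u v w
  induction w with
  | nil => simp
  | cons h p ih =>
    have := hf _ _ h
    simp only [SimpleGraph.Walk.length_cons]
    omega

lemma sunlet_lip_dist {V : Type*} {G : SimpleGraph V} (f : V → ℕ)
    (hf : ∀ a b, G.Adj a b → f a ≤ f b + 1) {u v : V} (h : G.Reachable u v) :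
    f u ≤ G.dist u v + f v := by
  obtain ⟨w, hw⟩ := h.exists_walk_length_eq_dist
  simpa [hw] using sunlet_lip_walk f hf w

lemma sunlet_sub_val_eq_one {m : ℕ} (hm : 3 ≤ m) {x y : Fin m} (h : (x - y).val = 1) :
    x.val = y.val + 1 ∨ (x.val = 0 ∧ y.val + 1 = m) := by
  rw [Fin.sub_def] at h
  simp only at h
  have hx := x.isLt
  have hy := y.isLt
  rcases Nat.lt_or_ge (m - y.val + x.val) m with h1 | h1
  · rw [Nat.mod_eq_of_lt h1] at h; omega
  · have : (m - y.val + x.val) % m = m - y.val + x.val - m := by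
      rw [Nat.mod_eq_sub_mod h1, Nat.mod_eq_of_lt (by omega)]
    omega

/-- Branch adjacency in the sunlet graph. -/
lemma sunlet_adj_branch {m n : ℕ} (k : Fin m) {a b : Fin (n + 1)}
    (h : (a : ℕ) + 1 = (b : ℕ)) : (sunletDeg m n).Adj (k, a) (k, b) := by
  rw [sunletDeg, SimpleGraph.fromRel_adj]
  refine ⟨?_, Or.inl (Or.inr ⟨rfl, h⟩)⟩
  simp only [ne_eq, Prod.mk.injEq, not_and]
  intro _ hab
  rw [hab] at h; omega

/-- Cycle adjacency in the sunlet graph. -/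
lemma sunlet_adj_cycle {m n : ℕ} {k k' : Fin m}
    (h : (SimpleGraph.cycleGraph m).Adj k k') :
    (sunletDeg m n).Adj (k, (0 : Fin (n + 1))) (k', 0) := by
  rw [sunletDeg, SimpleGraph.fromRel_adj]
  refine ⟨?_, Or.inl (Or.inl ⟨rfl, rfl, h⟩)⟩
  simp only [ne_eq, Prod.mk.injEq, not_and]
  intro hk
  exact absurd hk h.ne

/-- Walk down a branch. -/
lemma sunlet_walk_branch {m n : ℕ} (k : Fin m) :
    ∀ t (ht : t ≤ n),
      ∃ w : (sunletDeg m n).Walk (k, ⟨t, by omega⟩) (k, 0), w.length = t := by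
  intro t
  induction t with
  | zero => intro _; exact ⟨SimpleGraph.Walk.nil, rfl⟩
  | succ s ih =>
    intro ht
    obtain ⟨w, hw⟩ := ih (by omega)
    have hadj : (sunletDeg m n).Adj (k, ⟨s + 1, by omega⟩) (k, ⟨s, by omega⟩) :=
      ((sunletDeg m n).adj_symm (sunlet_adj_branch k (by simp)))
    exact ⟨SimpleGraph.Walk.cons hadj w, by simp [hw]⟩

/-- Cycle adjacency between consecutive indices. -/
lemma sunlet_cyc_adj_succ {m : ℕ} (hm : 3 ≤ m) (t : ℕ) (ht : t + 1 < m) :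
    (SimpleGraph.cycleGraph m).Adj ⟨t + 1, ht⟩ ⟨t, by omega⟩ := by
  rw [SimpleGraph.cycleGraph_adj']
  left
  rw [Fin.sub_def]
  simp only
  have h1 : m - t + (t + 1) = m + 1 := by omega
  rw [h1, Nat.add_mod_left, Nat.mod_eq_of_lt (by omega)]

lemma sunlet_cyc_adj_wrap {m : ℕ} (hm : 3 ≤ m) :
    (SimpleGraph.cycleGraph m).Adj ⟨0, by omega⟩ ⟨m - 1, by omega⟩ := by
  rw [SimpleGraph.cycleGraph_adj']
  left
  rw [Fin.sub_def]
  simp only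
  have h1 : m - (m - 1) + 0 = 1 := by omega
  rw [h1, Nat.mod_eq_of_lt (by omega)]

/-- Forward cycle walk. -/
lemma sunlet_walk_cyc_fwd {m n : ℕ} (hm : 3 ≤ m) :
    ∀ t (ht : t < m),
      ∃ w : (sunletDeg m n).Walk (⟨t, ht⟩, (0 : Fin (n + 1))) (⟨0, by omega⟩, 0),
        w.length = t := by
  intro t
  induction t with
  | zero => intro _; exact ⟨SimpleGraph.Walk.nil, rfl⟩
  | succ s ih =>
    intro ht
    obtain ⟨w, hw⟩ := ih (by omega)
    exact ⟨SimpleGraph.Walk.cons (sunlet_adj_cycle (sunlet_cyc_adj_succ hm s ht)) w,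
      by simp [hw]⟩

/-- Backward cycle walk. -/
lemma sunlet_walk_cyc_bwd {m n : ℕ} (hm : 3 ≤ m) :
    ∀ d t (ht : t < m), m - t ≤ d →
      ∃ w : (sunletDeg m n).Walk (⟨t, ht⟩, (0 : Fin (n + 1))) (⟨0, by omega⟩, 0),
        w.length ≤ m - t := by
  intro d
  induction d with
  | zero => intro t ht hd; omega
  | succ d ih =>
    intro t ht hd
    rcases Nat.eq_zero_or_pos t with rfl | htpos
    · exact ⟨SimpleGraph.Walk.nil, by simp⟩
    rcases Nat.lt_or_ge (t + 1) m with hlt | hge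
    · obtain ⟨w, hw⟩ := ih (t + 1) hlt (by omega)
      have hadj : (sunletDeg m n).Adj (⟨t, ht⟩, (0 : Fin (n + 1))) (⟨t + 1, hlt⟩, 0) :=
        (sunletDeg m n).adj_symm (sunlet_adj_cycle (sunlet_cyc_adj_succ hm t hlt))
      exact ⟨SimpleGraph.Walk.cons hadj w, by simp; omega⟩
    · -- t = m - 1
      have hteq : t = m - 1 := by omega
      subst hteq
      have hadj : (sunletDeg m n).Adj (⟨m - 1, ht⟩, (0 : Fin (n + 1))) (⟨0, by omega⟩, 0) :=
        (sunletDeg m n).adj_symm (sunlet_adj_cycle (sunlet_cyc_adj_wrap hm))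
      exact ⟨SimpleGraph.Walk.cons hadj SimpleGraph.Walk.nil, by simp; omega⟩

/-- From every vertex there is a short walk to the base vertex `(0,0)`. -/
lemma sunlet_walk_to_base {m n : ℕ} (hm : 3 ≤ m) (p : Fin m × Fin (n + 1)) :
    ∃ w : (sunletDeg m n).Walk p (⟨0, by omega⟩, 0), w.length ≤ m / 2 + n := by
  obtain ⟨k, l⟩ := p
  obtain ⟨w1, hw1⟩ := sunlet_walk_branch (n := n) k l.val (by omega)
  have hw1' : w1.length ≤ n := by omega
  have hk := k.isLt
  have hcyc : ∃ w2 : (sunletDeg m n).Walk (k, (0 : Fin (n + 1))) (⟨0, by omega⟩, 0),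
      w2.length ≤ m / 2 := by
    rcases le_or_gt k.val (m / 2) with hle | hgt
    · obtain ⟨w2, hw2⟩ := sunlet_walk_cyc_fwd (n := n) hm k.val k.isLt
      exact ⟨w2, by omega⟩
    · obtain ⟨w2, hw2⟩ := sunlet_walk_cyc_bwd (n := n) hm (m - k.val) k.val k.isLt le_rfl
      exact ⟨w2, by omega⟩
  obtain ⟨w2, hw2⟩ := hcyc
  refine ⟨w1.append w2, ?_⟩
  rw [SimpleGraph.Walk.length_append]
  omega

lemma sunlet_reachable {m n : ℕ} (hm : 3 ≤ m) (p q : Fin m × Fin (n + 1)) :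
    (sunletDeg m n).Reachable p q := by
  obtain ⟨w1, _⟩ := sunlet_walk_to_base (n := n) hm p
  obtain ⟨w2, _⟩ := sunlet_walk_to_base (n := n) hm q
  exact Nonempty.intro (w1.append w2.reverse)

/-- The key eccentricity lower bound: every vertex has eccentricity at least
`m / 2 + n`. -/
lemma sunlet_ecc_lower {m n : ℕ} (hm : 3 ≤ m) (hn : 1 ≤ n) (v : Fin m × Fin (n + 1)) :
    m / 2 + n ≤ eccentricity (sunletDeg m n) v := by
  haveI : NeZero m := ⟨by omega⟩
  obtain ⟨i, j⟩ := v
  set hf : Fin m := ⟨m / 2, by omega⟩ with hhf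
  set u : Fin m × Fin (n + 1) := (i + hf, ⟨n, by omega⟩) with hu
  -- the potential function
  set f : Fin m × Fin (n + 1) → ℕ := fun p =>
    if p.1 = i then max j.val p.2.val - min j.val p.2.val
    else min (p.1 - i).val (m - (p.1 - i).val) + p.2.val + j.val with hfdef
  -- the cycle sub-helper
  have hcyc_helper : ∀ x y : Fin m, x ≠ y → (x - y).val = 1 →
      f (x, 0) ≤ f (y, 0) + 1 ∧ f (y, 0) ≤ f (x, 0) + 1 := by
    intro x y hne hxy
    have hXY : ((x - i) - (y - i)).val = 1 := by
      rw [sub_sub_sub_cancel_right]; exact hxy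
    have hdisj := sunlet_sub_val_eq_one hm hXY
    have hXlt := (x - i).isLt
    have hYlt := (y - i).isLt
    by_cases hx : x = i <;> by_cases hy : y = i
    · exact absurd (hx.trans hy.symm) hne
    · have hX0 : (x - i).val = 0 := by rw [hx, sub_self]; simp
      have hY : (y - i).val = m - 1 := by omega
      simp only [hfdef, if_pos hx, if_neg hy, hY]
      simp only [Fin.val_zero]
      omega
    · have hY0 : (y - i).val = 0 := by rw [hy, sub_self]; simp
      have hX : (x - i).val = 1 := by omega
      simp only [hfdef, if_neg hx, if_pos hy, hX]
      simp only [Fin.val_zero]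
      omega
    · have hX0 : (x - i).val ≠ 0 := by
        intro h0
        exact hx (sub_eq_zero.mp (Fin.ext (by simpa using h0)))
      have hY0 : (y - i).val ≠ 0 := by
        intro h0
        exact hy (sub_eq_zero.mp (Fin.ext (by simpa using h0)))
      simp only [hfdef, if_neg hx, if_neg hy]
      simp only [Fin.val_zero]
      omega
  -- f is 1-Lipschitz
  have hlip : ∀ a b, (sunletDeg m n).Adj a b → f a ≤ f b + 1 := by
    intro a b hab
    rw [sunletDeg, SimpleGraph.fromRel_adj] at hab
    obtain ⟨hne, hr | hr⟩ := hab
    · rcases hr with ⟨h0a, h0b, hcyc⟩ | ⟨hk, hl⟩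
      · obtain ⟨ka, la⟩ := a
        obtain ⟨kb, lb⟩ := b
        simp only at h0a h0b hcyc
        subst h0a h0b
        rw [SimpleGraph.cycleGraph_adj'] at hcyc
        rcases hcyc with h | h
        · exact (hcyc_helper ka kb (fun h' => hne (by rw [h'])) h).1
        · exact (hcyc_helper kb ka (fun h' => hne (by rw [h'])) h).2
      · obtain ⟨ka, la⟩ := a
        obtain ⟨kb, lb⟩ := b
        simp only at hk hl
        subst hk
        by_cases hki : ka = i
        · simp only [hfdef, if_pos hki]; omega
        · simp only [hfdef, if_neg hki]; omega
    · rcases hr with ⟨h0b, h0a, hcyc⟩ | ⟨hk, hl⟩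
      · obtain ⟨ka, la⟩ := a
        obtain ⟨kb, lb⟩ := b
        simp only at h0a h0b hcyc
        subst h0a h0b
        rw [SimpleGraph.cycleGraph_adj'] at hcyc
        rcases hcyc with h | h
        · exact (hcyc_helper kb ka (fun h' => hne (by rw [h'])) h).2
        · exact (hcyc_helper ka kb (fun h' => hne (by rw [h'])) h).1
      · obtain ⟨ka, la⟩ := a
        obtain ⟨kb, lb⟩ := b
        simp only at hk hl
        subst hk
        by_cases hki : kb = i
        · simp only [hfdef, if_pos hki]; omega
        · simp only [hfdef, if_neg hki]; omega
  -- value of f at u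
  have hum : u.1 ≠ i := by
    simp only [hu]
    intro h
    have : hf = 0 := by
      have := add_eq_left.mp h
      exact this
    have : (hf : Fin m).val = 0 := by rw [this]; simp
    simp only [hhf] at this
    omega
  have husub : u.1 - i = hf := by simp only [hu]; exact add_sub_cancel_left i hf
  have hfu : f u = m / 2 + n + j.val := by
    simp only [hfdef, if_neg hum, husub, hhf]
    have hu2 : (u.2 : ℕ) = n := by rw [hu]
    omega
  have hfv : f (i, j) = 0 := by
    simp only [hfdef, if_pos rfl]
    omega
  have hreach : (sunletDeg m n).Reachable u (i, j) := sunlet_reachable hm _ _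
  have hdist := sunlet_lip_dist f hlip hreach
  rw [hfu, hfv] at hdist
  have hle : (sunletDeg m n).dist u (i, j) ≤ eccentricity (sunletDeg m n) (i, j) := by
    rw [eccentricity]
    exact Finset.le_sup (f := fun u => (sunletDeg m n).dist u (i, j)) (Finset.mem_univ u)
  omega

/-- The eccentricity upper bound at the base vertex. -/
lemma sunlet_ecc_upper {m n : ℕ} (hm : 3 ≤ m) :
    eccentricity (sunletDeg m n) (⟨0, by omega⟩, 0) ≤ m / 2 + n := by
  apply Finset.sup_le
  intro p _
  obtain ⟨w, hw⟩ := sunlet_walk_to_base (n := n) hm p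
  exact le_trans (SimpleGraph.dist_le w) hw

/-- For all natural numbers `n ≥ 1` and `m ≥ 3`, the radius of the sunlet graph
with degree `n` satisfies `rad(S_m^n) = ⌊m/2⌋ + n`. -/
theorem radius_sunletDeg (m n : ℕ) (hm : 3 ≤ m) (hn : 1 ≤ n) :
    graphRadius (Fin m × Fin (n + 1)) (sunletDeg m n) = m / 2 + n := by
  have hbase : eccentricity (sunletDeg m n) (⟨0, by omega⟩, 0) = m / 2 + n :=
    le_antisymm (sunlet_ecc_upper hm) (sunlet_ecc_lower hm hn _)
  apply le_antisymm
  · exact Nat.sInf_le ⟨(⟨0, by omega⟩, 0), hbase⟩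
  · have hne : {e : ℕ | ∃ v : Fin m × Fin (n + 1), eccentricity (sunletDeg m n) v = e}.Nonempty :=
      ⟨m / 2 + n, ⟨(⟨0, by omega⟩, 0), hbase⟩⟩
    apply le_csInf hne
    rintro e ⟨v, rfl⟩
    exact sunlet_ecc_lower hm hn v
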